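/- Let F ⊆ [λ]^ω, let c : F → λ be an injective function, and suppose X₀ ∈ F satisfies: c(X*) ∈ X₀ for every X* ∈ F with X* ⊊ X₀. Suppose M is a countable elementary submodel of H(θ) with F, c ∈ M and M ∩ λ = X₀. Then every X ∈ F with X ⊊ M ∩ λ satisfies X ∈ M. -/

import Mathlib

open FirstOrder

/-- The first-order language of set theory: a single binary relation symbol. -/
def setLang : FirstOrder.Language :=
  ⟨fun _ => Empty, fun n => match n with | 2 => Unit | _ => Empty⟩

/-- The universe of ZF sets as a `setLang`-structure, interpreting the binary relation
symbol by genuine membership `∈`. -/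
instance : setLang.Structure ZFSet where
  funMap {n} f _ := Empty.elim f
  RelMap {n} :=
    match n with
    | 0 => fun r _ => Empty.elim r
    | 1 => fun r _ => Empty.elim r
    | 2 => fun _ x => x 0 ∈ x 1
    | _ + 3 => fun r _ => Empty.elim r

/-- `x` is a (von Neumann) ordinal: a transitive set of transitive sets. -/
def ZFIsOrd (x : ZFSet) : Prop := x.IsTransitive ∧ ∀ y ∈ x, ZFSet.IsTransitive y

open FirstOrder.Language

namespace Stmt8Aux

/-- Atomic membership formula. -/
def memb {n : ℕ} (t u : setLang.Term (Fin 2 ⊕ Fin n)) : setLang.BoundedFormula (Fin 2) n :=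
  Relations.boundedFormula₂ (() : setLang.Relations 2) t u

lemma relmap_mem (s t : ZFSet) :
    Structure.RelMap (L := setLang) (M := ZFSet) (n := 2) () ![s, t] ↔ s ∈ t := Iff.rfl

lemma realize_memb {n : ℕ} (t u : setLang.Term (Fin 2 ⊕ Fin n)) (v : Fin 2 → ZFSet)
    (xs : Fin n → ZFSet) :
    (memb t u).Realize v xs ↔ t.realize (Sum.elim v xs) ∈ u.realize (Sum.elim v xs) := by
  refine (BoundedFormula.realize_rel₂ (R := (() : setLang.Relations 2)) (t₁ := t) (t₂ := u) (v := v) (xs := xs)).trans ?_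
  exact relmap_mem _ _

def vz {n : ℕ} (i : Fin n) : setLang.Term (Fin 2 ⊕ Fin n) := Term.var (Sum.inr i)
def vf {n : ℕ} (i : Fin 2) : setLang.Term (Fin 2 ⊕ Fin n) := Term.var (Sum.inl i)

/-- Free vars: 0 = `c`, 1 = `y`.  Bound vars: 0 = `x`, 1 = `p`, 2 = `a`, 3 = `b`.
Says: `p ∈ c`, `p = {a, b}`, `a = {x}`, `b = {x, y}`; i.e. `p = ⟨x, y⟩ ∈ c`. -/
def bodyF : setLang.BoundedFormula (Fin 2) 4 :=
  (memb (vz 1) (vf 0)) ⊓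
  (((memb (vz 4) (vz 1)).iff (((vz 4).bdEqual (vz 2)) ⊔ ((vz 4).bdEqual (vz 3)))).all) ⊓
  (((memb (vz 4) (vz 2)).iff ((vz 4).bdEqual (vz 0))).all) ⊓
  (((memb (vz 4) (vz 3)).iff (((vz 4).bdEqual (vz 0)) ⊔ ((vz 4).bdEqual (vf 1)))).all)

/-- `∃ x p a b, bodyF`. -/
def exF : setLang.Formula (Fin 2) := bodyF.ex.ex.ex.ex

lemma snoc5 {α : Type*} (x p a b z : α) :
    (Fin.snoc ![x, p, a, b] z : Fin 5 → α) = ![x, p, a, b, z] := by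
  funext i; fin_cases i <;> rfl

lemma snoc0 {α : Type*} (f : Fin 0 → α) (x : α) : (Fin.snoc f x : Fin 1 → α) = ![x] := by
  funext i; fin_cases i <;> rfl

lemma snoc1 {α : Type*} (x p : α) : (Fin.snoc ![x] p : Fin 2 → α) = ![x, p] := by
  funext i; fin_cases i <;> rfl

lemma snoc2 {α : Type*} (x p a : α) : (Fin.snoc ![x, p] a : Fin 3 → α) = ![x, p, a] := by
  funext i; fin_cases i <;> rfl

lemma snoc3 {α : Type*} (x p a b : α) : (Fin.snoc ![x, p, a] b : Fin 4 → α) = ![x, p, a, b] := by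
  funext i; fin_cases i <;> rfl

lemma realize_bodyF (c y x p a b : ZFSet) :
    bodyF.Realize (M := ZFSet) ![c, y] ![x, p, a, b] ↔
      (p ∈ c ∧ (∀ z, z ∈ p ↔ z = a ∨ z = b) ∧ (∀ z, z ∈ a ↔ z = x) ∧
        (∀ z, z ∈ b ↔ z = x ∨ z = y)) := by
  simp only [bodyF, realize_memb, vz, vf, BoundedFormula.realize_iff, BoundedFormula.realize_inf,
    BoundedFormula.realize_all, BoundedFormula.realize_sup, BoundedFormula.realize_bdEqual,
    Term.realize_var, Sum.elim_inl, Sum.elim_inr,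
    snoc5]
  simp [snoc5, and_assoc]

lemma realize_exF {S : Type*} [setLang.Structure S] (v : Fin 2 → S) :
    exF.Realize v ↔ ∃ x p a b : S, bodyF.Realize v ![x, p, a, b] := by
  simp only [exF, Formula.Realize, BoundedFormula.realize_ex]
  constructor
  · rintro ⟨x, p, a, b, h⟩
    exact ⟨x, p, a, b, by rwa [snoc0, snoc1, snoc2, snoc3] at h⟩
  · rintro ⟨x, p, a, b, h⟩
    exact ⟨x, p, a, b, by rwa [snoc0, snoc1, snoc2, snoc3]⟩

lemma pair_of_body {y x p a b : ZFSet} (h2 : ∀ z, z ∈ p ↔ z = a ∨ z = b)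
    (h3 : ∀ z, z ∈ a ↔ z = x) (h4 : ∀ z, z ∈ b ↔ z = x ∨ z = y) :
    p = ZFSet.pair x y := by
  have ha : a = ({x} : ZFSet) := ZFSet.ext fun z => by simp [h3 z]
  have hb : b = ({x, y} : ZFSet) := ZFSet.ext fun z => by simp [h4 z, ZFSet.mem_pair]
  have hp : p = ({a, b} : ZFSet) := ZFSet.ext fun z => by simp [h2 z, ZFSet.mem_pair]
  rw [hp, ha, hb]; rfl

end Stmt8Aux

open Stmt8Aux in
theorem stmt8 (lam : ZFSet) (hlam : ZFIsOrd lam)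
    (F : ZFSet)
    (hF : ∀ X ∈ F, X.toSet ⊆ lam.toSet ∧ X.toSet.Countable ∧ X.toSet.Infinite)
    (c : ZFSet) (hc : ZFSet.IsFunc F lam c)
    (hcinj : ∀ X X' y : ZFSet, ZFSet.pair X y ∈ c → ZFSet.pair X' y ∈ c → X = X')
    (X₀ : ZFSet) (hX₀F : X₀ ∈ F)
    (hX₀ : ∀ Xs ∈ F, Xs.toSet ⊂ X₀.toSet → ∀ y, ZFSet.pair Xs y ∈ c → y ∈ X₀)
    (M : setLang.ElementarySubstructure ZFSet)
    (hMcnt : (M : Set ZFSet).Countable)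
    (hFM : F ∈ M) (hcM : c ∈ M)
    (hMlam : X₀.toSet = {x | x ∈ M ∧ x ∈ lam}) :
    ∀ X ∈ F, X.toSet ⊂ X₀.toSet → X ∈ M := by
  intro X hXF hXsub
  -- choose y = c(X)
  obtain ⟨y, hpXy, -⟩ := hc.2 X hXF
  have hyX₀ : y ∈ X₀ := hX₀ X hXF hXsub y hpXy
  have hyM : y ∈ M := by
    have : y ∈ X₀.toSet := hyX₀
    rw [hMlam] at this
    exact this.1
  set cM : M := ⟨c, hcM⟩
  set yM : M := ⟨y, hyM⟩
  have hcoe : (⇑M.subtype ∘ ![cM, yM]) = ![c, y] := by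
    funext i; fin_cases i <;> rfl
  -- the existential formula holds in V
  have hV : exF.Realize (M := ZFSet) ![c, y] := by
    rw [realize_exF]
    refine ⟨X, ZFSet.pair X y, {X}, {X, y}, ?_⟩
    rw [realize_bodyF]
    refine ⟨hpXy, ?_, ?_, ?_⟩
    · intro z; simp [ZFSet.pair, ZFSet.mem_pair]
    · intro z; simp
    · intro z; simp [ZFSet.mem_pair]
  -- transfer to M
  have hM : exF.Realize (M := M) ![cM, yM] := by
    rw [← M.subtype.map_formula exF ![cM, yM], hcoe]
    exact hV
  rw [realize_exF] at hM
  obtain ⟨xM, pM, aM, bM, hbody⟩ := hM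
  -- transfer the body back to V
  have hcoe2 : (⇑M.subtype ∘ ![xM, pM, aM, bM]) = ![(xM : ZFSet), pM, aM, bM] := by
    funext i; fin_cases i <;> rfl
  have hbodyV : bodyF.Realize (M := ZFSet) ![c, y] ![(xM : ZFSet), pM, aM, bM] := by
    rw [← hcoe, ← hcoe2, M.subtype.map_boundedFormula]
    exact hbody
  rw [realize_bodyF] at hbodyV
  obtain ⟨hpc, h2, h3, h4⟩ := hbodyV
  have hpair : (pM : ZFSet) = ZFSet.pair (xM : ZFSet) y := pair_of_body h2 h3 h4
  have hXx : X = (xM : ZFSet) := hcinj X xM y hpXy (by rwa [hpair] at hpc)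
  rw [hXx]
  exact xM.2
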